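/- Define r(θ) = θ·i(θ) where i(θ) is the Fisher information of the noncentral chi-squared family χ²_1(2θ). Then lim_{θ→0} r(θ) = 0, lim_{θ→∞} r(θ) = 1/2, and r is strictly increasing on (0,∞). -/

import Mathlib

open MeasureTheory Set Real Filter

/-- Density of the noncentral chi-squared distribution χ²₁(2θ). -/
noncomputable def g1 (θ x : ℝ) : ℝ :=
  (2 * Real.pi * x) ^ (-(1:ℝ)/2) * Real.exp (-θ - x / 2) * Real.cosh (Real.sqrt (2 * θ * x))

/-- Fisher information of the family {χ²₁(2θ) : θ > 0}. -/
noncomputable def fisherInfo (θ : ℝ) : ℝ :=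
  (1 / (2 * θ)) *
    (∫ x in Set.Ioi (0:ℝ), x * Real.tanh (Real.sqrt (2 * θ * x)) ^ 2 * g1 θ x) - 1

/-- r(θ) = θ·i(θ) for the noncentral chi-squared family. -/
noncomputable def r (θ : ℝ) : ℝ := θ * fisherInfo θ

namespace RAux

noncomputable def c : ℝ := Real.sqrt (2 * Real.pi)

lemma c_pos : 0 < c := Real.sqrt_pos.2 (by positivity)

/-! ### Gaussian integrals -/

lemma integrable_exp_half : Integrable fun v : ℝ => Real.exp (-v^2/2) := by
  have h := integrable_exp_neg_mul_sq (b := (1/2:ℝ)) (by norm_num)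
  simp only [show ∀ v : ℝ, -(1/2:ℝ) * v^2 = -v^2/2 from fun v => by ring] at h
  exact h

lemma integrable_lin_exp : Integrable fun v : ℝ => v * Real.exp (-v^2/2) := by
  have h := integrable_mul_exp_neg_mul_sq (b := (1/2:ℝ)) (by norm_num)
  simp only [show ∀ v : ℝ, -(1/2:ℝ) * v^2 = -v^2/2 from fun v => by ring] at h
  exact h

lemma integrable_sq_exp_gen {b : ℝ} (hb : 0 < b) :
    Integrable fun v : ℝ => v^2 * Real.exp (-b * v^2) := by
  have h := integrable_rpow_mul_exp_neg_mul_sq hb (s := (2:ℕ))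
    (lt_of_lt_of_le neg_one_lt_zero (by norm_num))
  simp only [Real.rpow_natCast] at h
  exact h

lemma integrable_sq_exp : Integrable fun v : ℝ => v^2 * Real.exp (-v^2/2) := by
  have h := integrable_sq_exp_gen (b := (1/2:ℝ)) (by norm_num)
  simp only [show ∀ v : ℝ, -(1/2:ℝ) * v^2 = -v^2/2 from fun v => by ring] at h
  exact h

lemma int_exp : ∫ v : ℝ, Real.exp (-v^2/2) = c := by
  have h := integral_gaussian (1/2 : ℝ)
  simp only [show ∀ v : ℝ, -(1/2:ℝ) * v^2 = -v^2/2 from fun v => by ring] at h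
  rw [h, c]
  congr 1
  ring

lemma int_lin : ∫ v : ℝ, v * Real.exp (-v^2/2) = 0 := by
  have h := MeasureTheory.integral_neg_eq_self (fun v : ℝ => v * Real.exp (-v^2/2)) volume
  simp only [neg_sq, neg_mul, integral_neg] at h
  linarith

lemma int_sq : ∫ v : ℝ, v^2 * Real.exp (-v^2/2) = c := by
  have hderiv : ∀ v : ℝ, HasDerivAt (fun v : ℝ => -(v * Real.exp (-v^2/2)))
      (v^2 * Real.exp (-v^2/2) - Real.exp (-v^2/2)) v := by
    intro v
    have h1 : HasDerivAt (fun v : ℝ => -v^2/2) (-v) v := by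
      have h := (hasDerivAt_pow 2 v).neg.div_const 2
      refine h.congr_deriv ?_
      push_cast
      ring
    have h2 : HasDerivAt (fun v : ℝ => Real.exp (-v^2/2)) (Real.exp (-v^2/2) * (-v)) v :=
      (Real.hasDerivAt_exp _).comp v h1
    have h3 := ((hasDerivAt_id v).mul h2).neg
    refine h3.congr_deriv ?_
    simp only [id_eq]
    ring
  have hcoc : Tendsto (fun v : ℝ => -(v * Real.exp (-v^2/2))) (cocompact ℝ) (nhds 0) := by
    refine squeeze_zero_norm (fun v => ?_)
      (tendsto_rpow_abs_mul_exp_neg_mul_sq_cocompact (a := (1/2:ℝ)) (by norm_num) 1)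
    rw [Real.rpow_one, norm_neg, norm_mul, Real.norm_eq_abs, Real.norm_eq_abs,
      abs_of_nonneg (Real.exp_pos _).le,
      show -(1/2:ℝ) * v^2 = -v^2/2 from by ring]
  have hbot : Tendsto (fun v : ℝ => -(v * Real.exp (-v^2/2))) atBot (nhds 0) :=
    hcoc.mono_left (by rw [cocompact_eq_atBot_atTop]; exact le_sup_left)
  have htop : Tendsto (fun v : ℝ => -(v * Real.exp (-v^2/2))) atTop (nhds 0) :=
    hcoc.mono_left (by rw [cocompact_eq_atBot_atTop]; exact le_sup_right)
  have h := MeasureTheory.integral_of_hasDerivAt_of_tendsto hderiv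
    (integrable_sq_exp.sub integrable_exp_half) hbot htop
  rw [integral_sub integrable_sq_exp integrable_exp_half, int_exp] at h
  simp only [sub_self] at h
  linarith

lemma integrable_sq_exp_lin (b : ℝ) :
    Integrable fun v : ℝ => v^2 * Real.exp (-v^2/2 + b*v) := by
  apply Integrable.mono' (((integrable_sq_exp_gen (b := (1/4:ℝ)) (by norm_num))).const_mul
    (Real.exp (b^2)))
  · exact (Continuous.mul (by fun_prop) (by fun_prop)).aestronglyMeasurable
  · filter_upwards with v
    rw [Real.norm_eq_abs, abs_mul, abs_of_nonneg (sq_nonneg v),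
      abs_of_nonneg (Real.exp_pos _).le]
    have h1 : -v^2/2 + b*v ≤ b^2 + -(1/4:ℝ)*v^2 := by nlinarith [sq_nonneg (b - v/2)]
    calc v^2 * Real.exp (-v^2/2 + b*v) ≤ v^2 * Real.exp (b^2 + -(1/4:ℝ)*v^2) :=
          mul_le_mul_of_nonneg_left (Real.exp_le_exp.2 h1) (sq_nonneg v)
      _ = Real.exp (b^2) * (v^2 * Real.exp (-(1/4:ℝ)*v^2)) := by rw [Real.exp_add]; ring

lemma int_sq_lin (b : ℝ) :
    ∫ v : ℝ, v^2 * Real.exp (-v^2/2 + b*v) = c * (1+b^2) * Real.exp (b^2/2) := by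
  have key : ∀ v : ℝ, v^2 * Real.exp (-v^2/2 + b*v)
      = Real.exp (b^2/2) * (v^2 * Real.exp (-(v-b)^2/2)) := by
    intro v
    rw [mul_comm (Real.exp (b^2/2)), mul_assoc, ← Real.exp_add]
    congr 2
    ring
  simp only [key]
  rw [integral_const_mul]
  have shift := integral_add_right_eq_self (μ := volume)
    (fun v : ℝ => v^2 * Real.exp (-(v-b)^2/2)) b
  simp only [add_sub_cancel_right] at shift
  rw [← shift]
  have expand : ∀ v : ℝ, (v+b)^2 * Real.exp (-v^2/2)
      = v^2 * Real.exp (-v^2/2) + (2*b) * (v * Real.exp (-v^2/2)) + b^2 * Real.exp (-v^2/2) := by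
    intro v; ring
  simp only [expand]
  have i1 : Integrable fun v : ℝ => (2*b) * (v * Real.exp (-v^2/2)) :=
    integrable_lin_exp.const_mul (2*b)
  have i2 : Integrable fun v : ℝ => (b^2) * Real.exp (-v^2/2) :=
    integrable_exp_half.const_mul (b^2)
  have i3 : Integrable fun v : ℝ => v^2 * Real.exp (-v^2/2) + (2*b) * (v * Real.exp (-v^2/2)) :=
    integrable_sq_exp.add i1
  rw [integral_add i3 i2, integral_add integrable_sq_exp i1,
    integral_const_mul, integral_const_mul, int_sq, int_lin, int_exp]
  ring

lemma cosh_split : ∀ b v : ℝ, v^2 * Real.exp (-v^2/2) * Real.cosh (b*v)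
    = (1/2) * (v^2 * Real.exp (-v^2/2 + b*v)) + (1/2) * (v^2 * Real.exp (-v^2/2 + (-b)*v)) := by
  intro b v
  rw [Real.cosh_eq, Real.exp_add, Real.exp_add]
  ring

lemma integrable_sq_cosh (b : ℝ) :
    Integrable fun v : ℝ => v^2 * Real.exp (-v^2/2) * Real.cosh (b*v) := by
  have h := ((integrable_sq_exp_lin b).const_mul (1/2)).add
    ((integrable_sq_exp_lin (-b)).const_mul (1/2))
  exact h.congr (Eventually.of_forall fun v => (cosh_split b v).symm)

lemma int_sq_cosh (b : ℝ) :
    ∫ v : ℝ, v^2 * Real.exp (-v^2/2) * Real.cosh (b*v) = c * (1+b^2) * Real.exp (b^2/2) := by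
  simp only [cosh_split b]
  have j1 : Integrable fun v : ℝ => (1/2:ℝ) * (v^2 * Real.exp (-v^2/2 + b*v)) :=
    (integrable_sq_exp_lin b).const_mul (1/2)
  have j2 : Integrable fun v : ℝ => (1/2:ℝ) * (v^2 * Real.exp (-v^2/2 + (-b)*v)) :=
    (integrable_sq_exp_lin (-b)).const_mul (1/2)
  rw [integral_add j1 j2, integral_const_mul, integral_const_mul, int_sq_lin, int_sq_lin]
  rw [neg_sq]
  ring

/-! ### Even functions -/

lemma integral_Ioi_of_even (f : ℝ → ℝ) (hf : ∀ x, f (-x) = f x) (hi : Integrable f) :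
    ∫ x in Set.Ioi (0:ℝ), f x = (∫ x, f x) / 2 := by
  have h1 : ∫ x, f x = (∫ x in Set.Iic (0:ℝ), f x) + ∫ x in Set.Ioi (0:ℝ), f x := by
    rw [← setIntegral_union (Iic_disjoint_Ioi le_rfl) measurableSet_Ioi hi.integrableOn
      hi.integrableOn, Set.Iic_union_Ioi, setIntegral_univ]
  have h2 : ∫ x in Set.Iic (0:ℝ), f x = ∫ x in Set.Ioi (0:ℝ), f x := by
    have h := integral_comp_neg_Ioi (c := (0:ℝ)) f
    simp only [hf, neg_zero] at h
    exact h.symm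
  rw [h1, h2]; ring

lemma int_Ioi_sq : ∫ v in Set.Ioi (0:ℝ), v^2 * Real.exp (-v^2/2) = c / 2 := by
  rw [integral_Ioi_of_even _ (fun v => by simp [neg_sq]) integrable_sq_exp, int_sq]

lemma int_Ioi_sq_cosh (b : ℝ) :
    ∫ v in Set.Ioi (0:ℝ), v^2 * Real.exp (-v^2/2) * Real.cosh (b*v)
      = c * (1+b^2) * Real.exp (b^2/2) / 2 := by
  rw [integral_Ioi_of_even _ (fun v => by
      simp [neg_sq, mul_neg, Real.cosh_neg]) (integrable_sq_cosh b), int_sq_cosh]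

/-! ### Substitution x = u² -/

lemma sq_image : (fun u : ℝ => u^2) '' Set.Ioi 0 = Set.Ioi (0:ℝ) := by
  ext x
  simp only [Set.mem_image, Set.mem_Ioi]
  constructor
  · rintro ⟨u, hu, rfl⟩; positivity
  · intro hx; exact ⟨Real.sqrt x, Real.sqrt_pos.2 hx, Real.sq_sqrt hx.le⟩

lemma sq_hasDeriv : ∀ u ∈ Set.Ioi (0:ℝ),
    HasDerivWithinAt (fun u : ℝ => u^2) (2*u) (Set.Ioi 0) u := by
  intro u _
  simpa using (hasDerivAt_pow 2 u).hasDerivWithinAt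

lemma sq_injOn : Set.InjOn (fun u : ℝ => u^2) (Set.Ioi 0) := by
  intro u hu v hv h
  simp only [Set.mem_Ioi] at hu hv
  have h2 : Real.sqrt (u^2) = Real.sqrt (v^2) := by
    simp only at h
    rw [h]
  simpa [Real.sqrt_sq hu.le, Real.sqrt_sq hv.le] using h2

lemma subst (g : ℝ → ℝ) :
    ∫ x in Set.Ioi (0:ℝ), g x = ∫ u in Set.Ioi (0:ℝ), |2*u| • g (u^2) := by
  conv_lhs => rw [← sq_image]
  rw [integral_image_eq_integral_abs_deriv_smul measurableSet_Ioi sq_hasDeriv sq_injOn]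

lemma subst_integrable (g : ℝ → ℝ) :
    IntegrableOn g (Set.Ioi 0) ↔ IntegrableOn (fun u => |2*u| • g (u^2)) (Set.Ioi 0) := by
  conv_lhs => rw [← sq_image]
  exact integrableOn_image_iff_integrableOn_abs_deriv_smul measurableSet_Ioi sq_hasDeriv sq_injOn g

/-! ### Pointwise formulas -/

lemma g1_sq {θ : ℝ} (hθ : 0 ≤ θ) {u : ℝ} (hu : 0 < u) :
    g1 θ (u^2) = (c * u)⁻¹ * (Real.exp (-θ) * Real.exp (-u^2/2))
      * Real.cosh (Real.sqrt (2*θ) * u) := by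
  unfold g1
  have h1 : (2 * Real.pi * u^2) ^ (-(1:ℝ)/2) = (c * u)⁻¹ := by
    rw [show (-(1:ℝ)/2) = -(1/2) by norm_num, Real.rpow_neg (by positivity),
      ← Real.sqrt_eq_rpow, Real.sqrt_mul (by positivity), Real.sqrt_sq hu.le, c]
  have h2 : Real.sqrt (2 * θ * u^2) = Real.sqrt (2*θ) * u := by
    rw [Real.sqrt_mul (by linarith), Real.sqrt_sq hu.le]
  rw [h1, h2, show -θ - u^2/2 = -θ + (-u^2/2) by ring, Real.exp_add]

lemma mean_integrand_eq {θ : ℝ} (hθ : 0 ≤ θ) :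
    Set.EqOn (fun u : ℝ => |2*u| • ((fun x => x * g1 θ x) (u^2)))
      (fun u : ℝ => (2 * Real.exp (-θ) / c) *
        (u^2 * Real.exp (-u^2/2) * Real.cosh (Real.sqrt (2*θ) * u))) (Set.Ioi 0) := by
  intro u hu
  simp only [Set.mem_Ioi] at hu
  simp only [smul_eq_mul, g1_sq hθ hu, abs_of_pos (by linarith : (0:ℝ) < 2*u)]
  have hc := c_pos
  field_simp

lemma mean_value {θ : ℝ} (hθ : 0 ≤ θ) :
    (∫ x in Set.Ioi (0:ℝ), x * g1 θ x) = 1 + 2*θ := by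
  rw [subst (fun x => x * g1 θ x),
    setIntegral_congr_fun measurableSet_Ioi (mean_integrand_eq hθ),
    integral_const_mul, int_Ioi_sq_cosh,
    Real.sq_sqrt (by linarith : (0:ℝ) ≤ 2*θ)]
  have hc := c_pos.ne'
  rw [show 2*θ/2 = θ by ring]
  have he : Real.exp (-θ) * Real.exp θ = 1 := by
    rw [← Real.exp_add]; simp
  field_simp
  linear_combination he

lemma mean_integrable {θ : ℝ} (hθ : 0 ≤ θ) :
    IntegrableOn (fun x => x * g1 θ x) (Set.Ioi 0) := by
  rw [subst_integrable]
  apply IntegrableOn.congr_fun _ (mean_integrand_eq hθ).symm measurableSet_Ioi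
  exact ((integrable_sq_cosh _).const_mul _).integrableOn

/-! ### The sech-side integral -/

noncomputable def K (a : ℝ) : ℝ :=
  ∫ u in Set.Ioi (0:ℝ), u^2 * Real.exp (-u^2/2) / Real.cosh (a*u)

noncomputable def S (θ : ℝ) : ℝ := (2 * Real.exp (-θ) / c) * K (Real.sqrt (2*θ))

lemma sech_integrable_on (a : ℝ) :
    IntegrableOn (fun u : ℝ => u^2 * Real.exp (-u^2/2) / Real.cosh (a*u)) (Set.Ioi 0) := by
  apply Integrable.mono' integrable_sq_exp.integrableOn
  · exact (Continuous.div (by fun_prop) (by fun_prop)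
      (fun u => (Real.cosh_pos _).ne')).aestronglyMeasurable
  · filter_upwards with u
    rw [Real.norm_eq_abs, abs_div, abs_of_nonneg (by positivity),
      abs_of_pos (Real.cosh_pos _)]
    exact div_le_self (by positivity) (Real.one_le_cosh _)

lemma K_nonneg (a : ℝ) : 0 ≤ K a :=
  setIntegral_nonneg measurableSet_Ioi fun u _ => by
    have := Real.cosh_pos (a*u); positivity

lemma K_le (a : ℝ) : K a ≤ c / 2 := by
  have h : K a ≤ ∫ u in Set.Ioi (0:ℝ), u^2 * Real.exp (-u^2/2) := by
    apply setIntegral_mono_on (sech_integrable_on a) integrable_sq_exp.integrableOn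
      measurableSet_Ioi
    intro u _
    exact div_le_self (by positivity) (Real.one_le_cosh _)
  rw [int_Ioi_sq] at h
  exact h

lemma S_nonneg {θ : ℝ} : 0 ≤ S θ := by
  have h1 := K_nonneg (Real.sqrt (2*θ))
  have h2 := c_pos
  unfold S
  positivity

lemma S_le {θ : ℝ} : S θ ≤ Real.exp (-θ) := by
  unfold S
  have h1 := K_le (Real.sqrt (2*θ))
  have h2 := c_pos
  calc (2 * Real.exp (-θ) / c) * K (Real.sqrt (2*θ))
      ≤ (2 * Real.exp (-θ) / c) * (c/2) :=
        mul_le_mul_of_nonneg_left h1 (by positivity)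
    _ = Real.exp (-θ) := by field_simp

/-! ### The tanh² integral and r -/

lemma sech_integrand_eq {θ : ℝ} (hθ : 0 ≤ θ) :
    Set.EqOn (fun u : ℝ =>
        |2*u| • ((fun x => x * (1 - Real.tanh (Real.sqrt (2*θ*x))^2) * g1 θ x) (u^2)))
      (fun u : ℝ => (2 * Real.exp (-θ) / c) *
        (u^2 * Real.exp (-u^2/2) / Real.cosh (Real.sqrt (2*θ) * u))) (Set.Ioi 0) := by
  intro u hu
  simp only [Set.mem_Ioi] at hu
  have h2 : Real.sqrt (2 * θ * u^2) = Real.sqrt (2*θ) * u := by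
    rw [Real.sqrt_mul (by linarith), Real.sqrt_sq hu.le]
  have hch := Real.cosh_pos (Real.sqrt (2*θ) * u)
  have htanh : 1 - Real.tanh (Real.sqrt (2*θ) * u)^2
      = ((Real.cosh (Real.sqrt (2*θ) * u))^2)⁻¹ := by
    rw [Real.tanh_eq_sinh_div_cosh]
    have hid := Real.cosh_sq_sub_sinh_sq (Real.sqrt (2*θ) * u)
    field_simp
    try linarith
  simp only [smul_eq_mul, g1_sq hθ hu, h2, htanh, abs_of_pos (by linarith : (0:ℝ) < 2*u)]
  have hc := c_pos
  field_simp

lemma sech_x_integrable {θ : ℝ} (hθ : 0 ≤ θ) :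
    IntegrableOn (fun x => x * (1 - Real.tanh (Real.sqrt (2*θ*x))^2) * g1 θ x) (Set.Ioi 0) := by
  rw [subst_integrable]
  apply IntegrableOn.congr_fun _ (sech_integrand_eq hθ).symm measurableSet_Ioi
  exact ((sech_integrable_on _).const_mul _)

lemma sech_x_value {θ : ℝ} (hθ : 0 ≤ θ) :
    (∫ x in Set.Ioi (0:ℝ), x * (1 - Real.tanh (Real.sqrt (2*θ*x))^2) * g1 θ x) = S θ := by
  rw [subst (fun x => x * (1 - Real.tanh (Real.sqrt (2*θ*x))^2) * g1 θ x),
    setIntegral_congr_fun measurableSet_Ioi (sech_integrand_eq hθ),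
    integral_const_mul]
  rfl

lemma tanh_value {θ : ℝ} (hθ : 0 ≤ θ) :
    (∫ x in Set.Ioi (0:ℝ), x * Real.tanh (Real.sqrt (2*θ*x))^2 * g1 θ x)
      = (1 + 2*θ) - S θ := by
  have hpt : ∀ x : ℝ, x * Real.tanh (Real.sqrt (2*θ*x))^2 * g1 θ x
      = x * g1 θ x - x * (1 - Real.tanh (Real.sqrt (2*θ*x))^2) * g1 θ x := by
    intro x; ring
  simp only [hpt]
  rw [integral_sub (mean_integrable hθ) (sech_x_integrable hθ), mean_value hθ,
    sech_x_value hθ]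

lemma r_eq {θ : ℝ} (hθ : 0 < θ) : r θ = (1 - S θ) / 2 := by
  unfold r fisherInfo
  rw [tanh_value hθ.le]
  have hθ' := hθ.ne'
  field_simp
  try ring

/-! ### Monotonicity -/

lemma S_strict_anti {θ₁ θ₂ : ℝ} (h1 : 0 < θ₁) (h2 : θ₁ < θ₂) : S θ₂ < S θ₁ := by
  set f₁ : ℝ → ℝ := fun u => Real.exp (-θ₁) * (u^2 * Real.exp (-u^2/2)
    / Real.cosh (Real.sqrt (2*θ₁)*u)) with hf₁
  set f₂ : ℝ → ℝ := fun u => Real.exp (-θ₂) * (u^2 * Real.exp (-u^2/2)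
    / Real.cosh (Real.sqrt (2*θ₂)*u)) with hf₂
  have hi₁ : IntegrableOn f₁ (Set.Ioi 0) := (sech_integrable_on _).const_mul _
  have hi₂ : IntegrableOn f₂ (Set.Ioi 0) := (sech_integrable_on _).const_mul _
  have hlt : ∀ u ∈ Set.Ioi (0:ℝ), f₂ u < f₁ u := by
    intro u hu
    simp only [Set.mem_Ioi] at hu
    have hX : 0 < u^2 * Real.exp (-u^2/2) := by positivity
    have hch1 := Real.cosh_pos (Real.sqrt (2*θ₁)*u)
    have hch2 := Real.cosh_pos (Real.sqrt (2*θ₂)*u)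
    have hcosh : Real.cosh (Real.sqrt (2*θ₁)*u) ≤ Real.cosh (Real.sqrt (2*θ₂)*u) := by
      rw [Real.cosh_le_cosh]
      have hs : Real.sqrt (2*θ₁) ≤ Real.sqrt (2*θ₂) :=
        Real.sqrt_le_sqrt (by linarith)
      have h01 : (0:ℝ) ≤ Real.sqrt (2*θ₁) * u := by positivity
      have h02 : (0:ℝ) ≤ Real.sqrt (2*θ₂) * u := by positivity
      rw [abs_of_nonneg h01, abs_of_nonneg h02]
      exact mul_le_mul_of_nonneg_right hs hu.le
    have hdiv : u^2 * Real.exp (-u^2/2) / Real.cosh (Real.sqrt (2*θ₂)*u)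
        ≤ u^2 * Real.exp (-u^2/2) / Real.cosh (Real.sqrt (2*θ₁)*u) :=
      div_le_div_of_nonneg_left hX.le hch1 hcosh
    have hexp : Real.exp (-θ₂) < Real.exp (-θ₁) := Real.exp_lt_exp.2 (by linarith)
    calc f₂ u ≤ Real.exp (-θ₂) * (u^2 * Real.exp (-u^2/2)
            / Real.cosh (Real.sqrt (2*θ₁)*u)) :=
          mul_le_mul_of_nonneg_left hdiv (Real.exp_pos _).le
      _ < f₁ u := by
          apply mul_lt_mul_of_pos_right hexp
          positivity
  have hpos : 0 < ∫ u in Set.Ioi (0:ℝ), (f₁ u - f₂ u) := by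
    have hnonneg : 0 ≤ᵐ[volume.restrict (Set.Ioi (0:ℝ))] fun u => f₁ u - f₂ u := by
      filter_upwards [ae_restrict_mem measurableSet_Ioi] with u hu
      exact sub_nonneg.2 (hlt u hu).le
    rw [setIntegral_pos_iff_support_of_nonneg_ae hnonneg (hi₁.sub hi₂)]
    have hsub : Set.Ioi (0:ℝ) ⊆ Function.support (fun u => f₁ u - f₂ u) ∩ Set.Ioi 0 :=
      fun u hu => ⟨sub_ne_zero.2 (hlt u hu).ne', hu⟩
    refine lt_of_lt_of_le ?_ (measure_mono hsub)
    rw [Real.volume_Ioi]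
    exact ENNReal.zero_lt_top
  have hint : (∫ u in Set.Ioi (0:ℝ), (f₁ u - f₂ u))
      = Real.exp (-θ₁) * K (Real.sqrt (2*θ₁)) - Real.exp (-θ₂) * K (Real.sqrt (2*θ₂)) := by
    rw [integral_sub hi₁ hi₂, hf₁, hf₂, integral_const_mul, integral_const_mul]
    rfl
  rw [hint] at hpos
  have hc := c_pos
  unfold S
  rw [div_mul_eq_mul_div, div_mul_eq_mul_div, div_lt_div_iff₀ hc hc]
  nlinarith

end RAux

open RAux

/-- r(θ) → 0 as θ → 0, r(θ) → 1/2 as θ → ∞, and r is strictly increasing on (0,∞). -/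
theorem r_limits_and_strictMono :
    Tendsto r (nhdsWithin 0 (Set.Ioi 0)) (nhds 0) ∧
    Tendsto r atTop (nhds (1 / 2)) ∧
    StrictMonoOn r (Set.Ioi 0) := by
  have hc := c_pos
  refine ⟨?_, ?_, ?_⟩
  · -- limit at 0
    have hK : Tendsto (fun θ : ℝ => K (Real.sqrt (2*θ))) (nhdsWithin 0 (Set.Ioi 0))
        (nhds (c/2)) := by
      have hmain := MeasureTheory.tendsto_integral_filter_of_dominated_convergence
        (μ := volume.restrict (Set.Ioi (0:ℝ)))
        (l := nhdsWithin (0:ℝ) (Set.Ioi 0))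
        (F := fun θ u => u^2 * Real.exp (-u^2/2) / Real.cosh (Real.sqrt (2*θ)*u))
        (f := fun u => u^2 * Real.exp (-u^2/2))
        (bound := fun u => u^2 * Real.exp (-u^2/2))
        (Eventually.of_forall fun θ => (Continuous.div (by fun_prop) (by fun_prop)
          (fun u => (Real.cosh_pos _).ne')).aestronglyMeasurable)
        (Eventually.of_forall fun θ => ae_of_all _ fun u => by
          rw [Real.norm_eq_abs, abs_div, abs_of_nonneg (by positivity),
            abs_of_pos (Real.cosh_pos _)]
          exact div_le_self (by positivity) (Real.one_le_cosh _))
        integrable_sq_exp.integrableOn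
        (ae_of_all _ fun u => by
          have hcont : Continuous fun θ : ℝ =>
              u^2 * Real.exp (-u^2/2) / Real.cosh (Real.sqrt (2*θ)*u) := by
            apply Continuous.div continuous_const
            · exact Real.continuous_cosh.comp
                ((Real.continuous_sqrt.comp (by fun_prop)).mul continuous_const)
            · exact fun θ => (Real.cosh_pos _).ne'
          have h0 : Tendsto (fun θ : ℝ => u^2 * Real.exp (-u^2/2)
                / Real.cosh (Real.sqrt (2*θ)*u)) (nhdsWithin 0 (Set.Ioi 0))
              (nhds (u^2 * Real.exp (-u^2/2) / Real.cosh (Real.sqrt (2*0)*u))) :=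
            (hcont.tendsto 0).mono_left nhdsWithin_le_nhds
          simpa using h0)
      have hval : (∫ u in Set.Ioi (0:ℝ), u^2 * Real.exp (-u^2/2)) = c/2 := int_Ioi_sq
      rw [hval] at hmain
      exact hmain
    have hS : Tendsto S (nhdsWithin 0 (Set.Ioi 0)) (nhds 1) := by
      have hcoef : Tendsto (fun θ : ℝ => 2 * Real.exp (-θ) / c)
          (nhdsWithin 0 (Set.Ioi 0)) (nhds (2/c)) := by
        have hcont : Continuous fun θ : ℝ => 2 * Real.exp (-θ) / c := by fun_prop
        have h0 : Tendsto (fun θ : ℝ => 2 * Real.exp (-θ) / c) (nhdsWithin 0 (Set.Ioi 0))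
            (nhds (2 * Real.exp (-0) / c)) :=
          (hcont.tendsto 0).mono_left nhdsWithin_le_nhds
        simpa using h0
      have hmul := hcoef.mul hK
      have : (2:ℝ)/c * (c/2) = 1 := by field_simp
      rw [this] at hmul
      exact hmul
    have hlim : Tendsto (fun θ => (1 - S θ)/2) (nhdsWithin 0 (Set.Ioi 0)) (nhds 0) := by
      have h : Tendsto (fun θ : ℝ => (1 - S θ)/2) (nhdsWithin 0 (Set.Ioi 0))
          (nhds ((1 - 1)/2)) := (tendsto_const_nhds.sub hS).div_const 2
      simpa using h
    apply hlim.congr'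
    filter_upwards [self_mem_nhdsWithin] with θ hθ
    exact (r_eq hθ).symm
  · -- limit at ∞
    have hS : Tendsto S atTop (nhds 0) :=
      squeeze_zero (fun θ => S_nonneg) (fun θ => S_le) Real.tendsto_exp_neg_atTop_nhds_zero
    have hlim : Tendsto (fun θ => (1 - S θ)/2) atTop (nhds (1/2)) := by
      have h : Tendsto (fun θ : ℝ => (1 - S θ)/2) atTop
          (nhds ((1 - 0)/2)) := (tendsto_const_nhds.sub hS).div_const 2
      simpa using h
    apply hlim.congr'
    filter_upwards [eventually_gt_atTop (0:ℝ)] with θ hθ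
    exact (r_eq hθ).symm
  · -- strict mono
    intro θ₁ h₁ θ₂ h₂ h12
    simp only [Set.mem_Ioi] at h₁ h₂
    rw [r_eq h₁, r_eq h₂]
    have := S_strict_anti h₁ h12
    linarith
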